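/- For v ∈ (0, 1/2), there is no infinite sequence of connected open arcs U₀, U₁, U₂, … on the circle with U₀ nonempty such that each Uₙ₊₁ is the image of Uₙ under some Kasner arc map Kα with Uₙ ⊆ Aα \ 𝐀 (where 𝐀 is the union of pairwise overlaps). Equivalently: for any nonempty connected open U and any admissible choice of symbols ω, there exists N ≥ 0 such that K_ω^N(U) intersects the overlap set 𝐀. -/

import Mathlib

open Real

/-- The arc `Aα` on the circle (in angular coordinates): `A₁ = {φ : cos φ ≥ v}` and its
rotations by `±2π/3`. -/
def kasnerArc (v : ℝ) : Fin 3 → Set ℝ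
  | 0 => {φ : ℝ | Real.cos φ ≥ v}
  | 1 => {φ : ℝ | Real.cos (φ - 2*π/3) ≥ v}
  | 2 => {φ : ℝ | Real.cos (φ + 2*π/3) ≥ v}

/-- The multi-valued overlap set `𝐀 = ⋃_{α ≠ β} Aα ∩ Aβ`. -/
def overlapSet (v : ℝ) : Set ℝ :=
  ⋃ (α : Fin 3) (β : Fin 3) (_ : α ≠ β), kasnerArc v α ∩ kasnerArc v β

/-- The Kasner arc map `Kα` in angular coordinates: `K₁(φ) = π - 2 arctan(((1+v)/(1-v)) tan(φ/2))`
and its conjugates under rotation by `±2π/3`. -/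
noncomputable def kasnerArcMap (v : ℝ) : Fin 3 → ℝ → ℝ
  | 0 => fun φ => π - 2 * Real.arctan ((1 + v) / (1 - v) * Real.tan (φ / 2))
  | 1 => fun φ => (π - 2 * Real.arctan ((1 + v) / (1 - v) * Real.tan ((φ - 2*π/3) / 2))) + 2*π/3
  | 2 => fun φ => (π - 2 * Real.arctan ((1 + v) / (1 - v) * Real.tan ((φ + 2*π/3) / 2))) - 2*π/3

/-- For `v ∈ (0,1/2)` there is no infinite sequence of nonempty connected open
arcs `U₀, U₁, U₂, …` such that each `Uₙ₊₁` is the image of `Uₙ` under some arc map `K_{αₙ}`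
with `Uₙ ⊆ A_{αₙ} \ 𝐀`; i.e. every admissible sequence of iterated images must eventually
meet the overlap set `𝐀`. -/

noncomputable def tvec : Fin 3 → ℝ
  | 0 => 0
  | 1 => -(2*π/3)
  | 2 => 2*π/3

lemma aux1 (v : ℝ) (hv0 : 0 < v) (hv12 : v < 1/2) (ψ : ℝ)
    (h1 : v ≤ Real.cos ψ) (h2 : Real.cos ψ < 1/2) :
    v ≤ Real.cos (ψ - 2*π/3) ∨ v ≤ Real.cos (ψ + 2*π/3) := by
  have hc23 : Real.cos (2*π/3) = -(1/2) := by
    rw [show (2*π/3 : ℝ) = π - π/3 by ring, Real.cos_pi_sub, Real.cos_pi_div_three]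
  have hs23 : Real.sin (2*π/3) = Real.sqrt 3 / 2 := by
    rw [show (2*π/3 : ℝ) = π - π/3 by ring, Real.sin_pi_sub, Real.sin_pi_div_three]
  have hpyth := Real.sin_sq_add_cos_sq ψ
  have hsq3 : Real.sqrt 3 ^ 2 = 3 := Real.sq_sqrt (by norm_num)
  have hsq3' : (0:ℝ) ≤ Real.sqrt 3 := Real.sqrt_nonneg 3
  have hss : Real.sin ψ ^ 2 ≥ 3/4 := by nlinarith
  rcases le_total 0 (Real.sin ψ) with hsgn | hsgn
  · left
    rw [Real.cos_sub, hc23, hs23]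
    have h4 : Real.sqrt 3 / 2 ≤ Real.sin ψ := by nlinarith
    nlinarith
  · right
    rw [Real.cos_add, hc23, hs23]
    have h4 : Real.sin ψ ≤ -(Real.sqrt 3 / 2) := by nlinarith
    nlinarith

lemma lemC (a b : ℝ) (h : ∀ w ∈ Set.Icc a b, (1:ℝ)/2 ≤ Real.cos w) : b - a < 2*π := by
  by_contra hcon
  push_neg at hcon
  have hπ := Real.pi_pos
  set k : ℤ := ⌈(a - π)/(2*π)⌉ with hk
  have h1 : a ≤ π + k*(2*π) := by
    have := Int.le_ceil ((a - π)/(2*π))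
    rw [div_le_iff₀ (by positivity)] at this
    linarith
  have h2 : π + k*(2*π) ≤ b := by
    have := Int.ceil_lt_add_one ((a - π)/(2*π))
    rw [← hk, show (a - π)/(2*π) + 1 = (a - π + 2*π)/(2*π) by field_simp] at this
    rw [lt_div_iff₀ (by positivity)] at this
    linarith
  have h3 := h _ ⟨h1, h2⟩
  rw [Real.cos_add_int_mul_two_pi, Real.cos_pi] at h3
  linarith

lemma hasD (c z : ℝ) (hz : (1:ℝ)/2 ≤ Real.cos z) :
    HasDerivAt (fun φ => 2 * Real.arctan (c * Real.tan (φ/2)))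
      (c / (Real.cos (z/2)^2 + c^2 * Real.sin (z/2)^2)) z := by
  have hcz : Real.cos z = 2 * Real.cos (z/2)^2 - 1 := by
    rw [← Real.cos_two_mul]; congr 1; ring
  have hk2 : (3:ℝ)/4 ≤ Real.cos (z/2)^2 := by
    rw [hcz] at hz; linarith
  have hk0 : Real.cos (z/2) ≠ 0 := by
    intro h; rw [h] at hk2; norm_num at hk2
  have h1 : HasDerivAt (fun φ : ℝ => φ/2) (1/2) z := (hasDerivAt_id z).div_const 2
  have h2 : HasDerivAt (fun φ : ℝ => Real.tan (φ/2)) (1 / Real.cos (z/2)^2 * (1/2)) z :=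
    (Real.hasDerivAt_tan hk0).comp (h := fun φ : ℝ => φ/2) z h1
  have h3 := h2.const_mul c
  have h4 := (Real.hasDerivAt_arctan (c * Real.tan (z/2))).comp z h3
  have h5 := h4.const_mul 2
  refine h5.congr_deriv ?_
  have hpyth := Real.sin_sq_add_cos_sq (z/2)
  rw [Real.tan_eq_sin_div_cos]
  have hden : Real.cos (z/2)^2 + c^2 * Real.sin (z/2)^2 ≠ 0 := by nlinarith
  field_simp

lemma lemD (c : ℝ) (hc1 : 1 < c) (hc3 : c < 3) (p q : ℝ) (hpq : p ≤ q)
    (h : ∀ z ∈ Set.Icc p q, (1:ℝ)/2 ≤ Real.cos z) :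
    4*c/(3+c^2) * (q - p) ≤
      2 * Real.arctan (c * Real.tan (q/2)) - 2 * Real.arctan (c * Real.tan (p/2)) := by
  have hderiv : ∀ z ∈ Set.Icc p q,
      HasDerivAt (fun φ => 2 * Real.arctan (c * Real.tan (φ/2)))
        (c / (Real.cos (z/2)^2 + c^2 * Real.sin (z/2)^2)) z := fun z hz => hasD c z (h z hz)
  have hbound : ∀ z ∈ Set.Icc p q,
      4*c/(3+c^2) ≤ c / (Real.cos (z/2)^2 + c^2 * Real.sin (z/2)^2) := by
    intro z hz
    have hcz : Real.cos z = 2 * Real.cos (z/2)^2 - 1 := by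
      rw [← Real.cos_two_mul]; congr 1; ring
    have hpyth := Real.sin_sq_add_cos_sq (z/2)
    have hs : Real.sin (z/2)^2 ≤ 1/4 := by nlinarith [h z hz]
    have hden1 : 0 < Real.cos (z/2)^2 + c^2 * Real.sin (z/2)^2 := by nlinarith
    rw [div_le_div_iff₀ (by positivity) hden1]
    nlinarith [mul_nonneg (by nlinarith : (0:ℝ) ≤ c*(c^2-1))
      (by linarith : (0:ℝ) ≤ 1/4 - Real.sin (z/2)^2)]
  have := (convex_Icc p q).mul_sub_le_image_sub_of_le_deriv
    (fun z hz => (hderiv z hz).continuousAt.continuousWithinAt)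
    (fun z hz => ((hderiv z (interior_subset hz)).differentiableAt).differentiableWithinAt)
    (fun z hz => by
      rw [(hderiv z (interior_subset hz)).deriv]
      exact hbound z (interior_subset hz))
    p (Set.left_mem_Icc.2 hpq) q (Set.right_mem_Icc.2 hpq) hpq
  simpa using this

lemma lemB (v : ℝ) (hv0 : 0 < v) (hv12 : v < 1/2) (a : Fin 3) (z : ℝ)
    (hz : z ∈ kasnerArc v a \ overlapSet v) : 1/2 ≤ Real.cos (z + tvec a) := by
  obtain ⟨hza, hzo⟩ := hz
  by_contra hlt
  push_neg at hlt
  apply hzo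
  simp only [overlapSet, Set.mem_iUnion]
  fin_cases a
  · have hza' : v ≤ Real.cos z := hza
    have hlt' : Real.cos z < 1/2 := by simpa [tvec] using hlt
    rcases aux1 v hv0 hv12 z hza' hlt' with h | h
    · exact ⟨0, 1, by decide, hza', h⟩
    · exact ⟨0, 2, by decide, hza', h⟩
  · have hza' : v ≤ Real.cos (z - 2*π/3) := hza
    have hlt' : Real.cos (z - 2*π/3) < 1/2 := by
      rw [show z - 2*π/3 = z + tvec 1 by simp [tvec]; ring]; exact hlt
    rcases aux1 v hv0 hv12 (z - 2*π/3) hza' hlt' with h | h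
    · have h2 : v ≤ Real.cos (z + 2*π/3) := by
        rw [show z + 2*π/3 = (z - 2*π/3 - 2*π/3) + 2*π by ring, Real.cos_add_two_pi]
        exact h
      exact ⟨1, 2, by decide, hza', h2⟩
    · have h2 : v ≤ Real.cos z := by
        rw [show z = z - 2*π/3 + 2*π/3 by ring]; exact h
      exact ⟨0, 1, by decide, h2, hza'⟩
  · have hza' : v ≤ Real.cos (z + 2*π/3) := hza
    have hlt' : Real.cos (z + 2*π/3) < 1/2 := by
      rw [show z + 2*π/3 = z + tvec 2 by simp [tvec]]; exact hlt
    rcases aux1 v hv0 hv12 (z + 2*π/3) hza' hlt' with h | h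
    · have h2 : v ≤ Real.cos z := by
        rw [show z = z + 2*π/3 - 2*π/3 by ring]; exact h
      exact ⟨0, 2, by decide, h2, hza'⟩
    · have h2 : v ≤ Real.cos (z - 2*π/3) := by
        rw [show z - 2*π/3 = (z + 2*π/3 + 2*π/3) - 2*π by ring, Real.cos_sub_two_pi]
        exact h
      exact ⟨1, 2, by decide, h2, hza'⟩

lemma lemE (v : ℝ) (b : Fin 3) (φ : ℝ) :
    kasnerArcMap v b φ =
      π - 2 * Real.arctan ((1+v)/(1-v) * Real.tan ((φ + tvec b)/2)) - tvec b := by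
  fin_cases b <;> simp only [kasnerArcMap, tvec] <;> ring_nf

theorem no_orbit_avoiding_overlaps (v : ℝ) (hv : v ∈ Set.Ioo (0:ℝ) (1/2)) :
    ¬ ∃ (α : ℕ → Fin 3) (U : ℕ → Set ℝ),
        (U 0).Nonempty ∧
        (∀ n, IsOpen (U n)) ∧
        (∀ n, IsPreconnected (U n)) ∧
        (∀ n, U n ⊆ kasnerArc v (α n) \ overlapSet v) ∧
        (∀ n, U (n + 1) = kasnerArcMap v (α n) '' U n) := by
  obtain ⟨hv0, hv12⟩ := hv
  rintro ⟨α, U, ⟨u, hu⟩, hopen, hconn, hsub, himg⟩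
  have hπ := Real.pi_pos
  set c : ℝ := (1+v)/(1-v) with hc
  have h1v : (0:ℝ) < 1 - v := by linarith
  have hc1 : 1 < c := by rw [hc, lt_div_iff₀ h1v]; linarith
  have hc3 : c < 3 := by rw [hc, div_lt_iff₀ h1v]; linarith
  set lam : ℝ := 4*c/(3+c^2) with hlam
  have hc0 : (0:ℝ) < c := by linarith
  have hlampos : 0 < lam := by rw [hlam]; positivity
  have hlam1 : 1 < lam := by
    rw [hlam, lt_div_iff₀ (by positivity)]
    nlinarith [mul_pos (sub_pos.2 hc1) (sub_pos.2 hc3)]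
  obtain ⟨ε, hε, hball⟩ := Metric.isOpen_iff.1 (hopen 0) u hu
  have hy : u + ε/2 ∈ U 0 := by
    apply hball
    rw [Metric.mem_ball, Real.dist_eq, add_sub_cancel_left, abs_of_pos (half_pos hε)]
    linarith
  let X : ℕ → ℝ := fun n =>
    Nat.rec (motive := fun _ => ℝ) u (fun k xk => kasnerArcMap v (α k) xk) n
  let Y : ℕ → ℝ := fun n =>
    Nat.rec (motive := fun _ => ℝ) (u + ε/2) (fun k yk => kasnerArcMap v (α k) yk) n
  have hXs : ∀ n, X (n+1) = kasnerArcMap v (α n) (X n) := fun n => rfl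
  have hYs : ∀ n, Y (n+1) = kasnerArcMap v (α n) (Y n) := fun n => rfl
  have hX0 : X 0 = u := rfl
  have hY0 : Y 0 = u + ε/2 := rfl
  have hcosseg : ∀ n, X n ∈ U n → Y n ∈ U n →
      ∀ z ∈ Set.Icc (min (X n) (Y n) + tvec (α n)) (max (X n) (Y n) + tvec (α n)),
        (1:ℝ)/2 ≤ Real.cos z := by
    intro n hX hY z hz
    have hp : min (X n) (Y n) ∈ U n := by
      rcases min_choice (X n) (Y n) with h | h <;> rw [h] <;> assumption
    have hq : max (X n) (Y n) ∈ U n := by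
      rcases max_choice (X n) (Y n) with h | h <;> rw [h] <;> assumption
    have hseg := (hconn n).Icc_subset hp hq
    have hw : z - tvec (α n) ∈ Set.Icc (min (X n) (Y n)) (max (X n) (Y n)) :=
      ⟨by linarith [hz.1], by linarith [hz.2]⟩
    have := lemB v hv0 hv12 (α n) (z - tvec (α n)) (hsub n (hseg hw))
    simpa using this
  have key : ∀ n, X n ∈ U n ∧ Y n ∈ U n ∧ lam ^ n * (ε/2) ≤ |Y n - X n| := by
    intro n
    induction n with
    | zero =>
      refine ⟨hu, hy, ?_⟩
      rw [hY0, hX0, add_sub_cancel_left, abs_of_pos (half_pos hε), pow_zero, one_mul]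
    | succ n ih =>
      obtain ⟨hX, hY, hd⟩ := ih
      refine ⟨?_, ?_, ?_⟩
      · rw [himg n, hXs n]; exact Set.mem_image_of_mem _ hX
      · rw [himg n, hYs n]; exact Set.mem_image_of_mem _ hY
      · have hpq : min (X n) (Y n) ≤ max (X n) (Y n) := min_le_max
        have hD := lemD c hc1 hc3 (min (X n) (Y n) + tvec (α n))
          (max (X n) (Y n) + tvec (α n)) (by linarith) (hcosseg n hX hY)
        have hqp : |Y n - X n| = max (X n) (Y n) - min (X n) (Y n) :=
          (max_sub_min_eq_abs (X n) (Y n)).symm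
        have hdiff : Y (n+1) - X (n+1) =
            2 * Real.arctan (c * Real.tan ((X n + tvec (α n))/2)) -
            2 * Real.arctan (c * Real.tan ((Y n + tvec (α n))/2)) := by
          rw [hXs n, hYs n, lemE v (α n) (X n), lemE v (α n) (Y n), ← hc]; ring
        have habs : 2 * Real.arctan (c * Real.tan ((max (X n) (Y n) + tvec (α n))/2)) -
            2 * Real.arctan (c * Real.tan ((min (X n) (Y n) + tvec (α n))/2)) ≤
            |Y (n+1) - X (n+1)| := by
          rcases le_total (X n) (Y n) with h | h
          · rw [min_eq_left h, max_eq_right h]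
            have := neg_abs_le (Y (n+1) - X (n+1))
            linarith [hdiff]
          · rw [min_eq_right h, max_eq_left h]
            have := le_abs_self (Y (n+1) - X (n+1))
            linarith [hdiff]
        calc lam ^ (n+1) * (ε/2) = lam * (lam ^ n * (ε/2)) := by ring
          _ ≤ lam * |Y n - X n| := mul_le_mul_of_nonneg_left hd hlampos.le
          _ = lam * ((max (X n) (Y n) + tvec (α n)) - (min (X n) (Y n) + tvec (α n))) := by
              rw [hqp]; ring
          _ ≤ _ := le_trans hD habs
  have bnd : ∀ n, |Y n - X n| < 2*π := by
    intro n
    obtain ⟨hX, hY, _⟩ := key n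
    have h1 := lemC _ _ (hcosseg n hX hY)
    have h2 : max (X n) (Y n) - min (X n) (Y n) = |Y n - X n| := max_sub_min_eq_abs _ _
    linarith
  obtain ⟨n, hn⟩ := pow_unbounded_of_one_lt (2*π/(ε/2)) hlam1
  have h1 := (key n).2.2
  have h2 := bnd n
  rw [div_lt_iff₀ (half_pos hε)] at hn
  linarith
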